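/- In the symmetric group, for j ≤ k − 1, k ≤ i and l ≤ j, the block-crossings satisfy [i,j][k,l] = [k−1,l][i,j+1], where [i,j] = σ_i σ_{i-1} ··· σ_j. -/

import Mathlib

/-- The adjacent transposition `σ_i = (i, i+1)` in the symmetric group on `ℕ`
(the letters of interest being the positive natural numbers). -/
def sigmaPerm (i : ℕ) : Equiv.Perm ℕ := Equiv.swap i (i + 1)

/-- The block-crossing `[i,j] = σ_i σ_{i-1} ⋯ σ_j` (for `j ≤ i`), defined recursively by
`[j,j] = σ_j` and `[i,j] = σ_i · [i-1,j]`. -/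
def blk (i j : ℕ) : Equiv.Perm ℕ :=
  (((List.range' j (i + 1 - j)).reverse).map sigmaPerm).prod

lemma blk_empty {i j : ℕ} (h : i < j) : blk i j = 1 := by
  have : i + 1 - j = 0 := by omega
  simp [blk, this]

lemma blk_self (j : ℕ) : blk j j = sigmaPerm j := by
  have : j + 1 - j = 1 := by omega
  simp [blk, this]

lemma blk_left {i j : ℕ} (h : j ≤ i + 1) : blk (i + 1) j = sigmaPerm (i + 1) * blk i j := by
  have h1 : i + 1 + 1 - j = (i + 1 - j) + 1 := by omega
  have h2 : j + (i + 1 - j) = i + 1 := by omega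
  rw [blk, blk, h1, List.range'_1_concat, h2]
  simp

lemma blk_right {i j : ℕ} (h : j ≤ i) : blk i j = blk i (j + 1) * sigmaPerm j := by
  have h1 : i + 1 - j = (i + 1 - (j + 1)) + 1 := by omega
  rw [blk, blk, h1, List.range'_succ]
  simp

lemma blk_split {i m l : ℕ} (h1 : l ≤ m + 1) (h2 : m ≤ i) :
    blk i l = blk i (m + 1) * blk m l := by
  have key := List.range'_append_1 (s := l) (m := m + 1 - l) (n := i - m)
  rw [show l + (m + 1 - l) = m + 1 by omega,
    show (m + 1 - l) + (i - m) = i + 1 - l by omega] at key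
  rw [blk, blk, blk, ← key, show i + 1 - (m + 1) = i - m by omega]
  simp

lemma sigma_comm {a b : ℕ} (h : a + 2 ≤ b) : Commute (sigmaPerm a) (sigmaPerm b) := by
  have : ∀ x, (sigmaPerm a * sigmaPerm b) x = (sigmaPerm b * sigmaPerm a) x := by
    intro x
    simp only [sigmaPerm, Equiv.Perm.mul_apply, Equiv.swap_apply_def]
    split_ifs <;> omega
  exact Equiv.ext this

lemma braid (i : ℕ) :
    sigmaPerm i * sigmaPerm (i + 1) * sigmaPerm i
      = sigmaPerm (i + 1) * sigmaPerm i * sigmaPerm (i + 1) := by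
  have h1 : sigmaPerm i * sigmaPerm (i + 1) * sigmaPerm i = Equiv.swap i (i + 1 + 1) := by
    rw [sigmaPerm, sigmaPerm, Equiv.swap_comm i (i + 1), Equiv.swap_comm (i + 1) (i + 1 + 1)]
    exact Equiv.swap_mul_swap_mul_swap (by omega) (by omega)
  have h2 : sigmaPerm (i + 1) * sigmaPerm i * sigmaPerm (i + 1)
      = Equiv.swap i (i + 1 + 1) := by
    rw [sigmaPerm, sigmaPerm,
      Equiv.swap_mul_swap_mul_swap (x := i) (y := i + 1) (z := i + 1 + 1) (by omega) (by omega)]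
    exact Equiv.swap_comm _ _
  rw [h1, h2]

/-- σ_a commutes with blk i j provided a is at distance ≥ 2 from all of [j,i]. -/
lemma sigma_blk_comm {a i j : ℕ} (h : i + 2 ≤ a ∨ a + 2 ≤ j) :
    Commute (sigmaPerm a) (blk i j) := by
  apply Commute.list_prod_right
  intro x hx
  simp only [List.mem_map, List.mem_reverse, List.mem_range'_1] at hx
  obtain ⟨m, hm, rfl⟩ := hx
  rcases h with h | h
  · exact (sigma_comm (by omega)).symm
  · exact sigma_comm (by omega)

lemma blk_blk_comm {i1 j1 i2 j2 : ℕ} (h : i2 + 2 ≤ j1) :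
    Commute (blk i1 j1) (blk i2 j2) := by
  apply Commute.list_prod_left
  intro x hx
  simp only [List.mem_map, List.mem_reverse, List.mem_range'_1] at hx
  obtain ⟨m, hm, rfl⟩ := hx
  exact sigma_blk_comm (Or.inl (by omega))

/-- Pull a single σ through a block: `[i,j] σ_{t+1} = σ_t [i,j]` for `j ≤ t`, `t+1 ≤ i`. -/
lemma blk_pull : ∀ i {j t : ℕ}, j ≤ t → t + 1 ≤ i →
    blk i j * sigmaPerm (t + 1) = sigmaPerm t * blk i j := by
  intro i
  induction i with
  | zero => intro j t h1 h2; omega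
  | succ i ih =>
    intro j t h1 h2
    rcases Nat.lt_or_ge (t + 1) (i + 1) with hlt | hge
    · rw [blk_left (by omega), mul_assoc, ih h1 (by omega), ← mul_assoc,
        ← (sigma_comm (a := t) (b := i + 1) (by omega)).eq, mul_assoc]
    · -- t = i
      have ht : t = i := by omega
      subst ht
      rcases Nat.lt_or_ge j t with hj | hj
      · -- j < t, so t ≥ 1
        obtain ⟨m, rfl⟩ : ∃ m, t = m + 1 := ⟨t - 1, by omega⟩
        rw [blk_left (by omega), blk_left (by omega)]
        simp only [mul_assoc]
        rw [← (sigma_blk_comm (a := m + 1 + 1) (i := m) (j := j) (Or.inl (by omega))).eq]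
        simp only [← mul_assoc]
        rw [← braid (m + 1)]
      · -- j = t
        have : j = t := by omega
        subst this
        rw [blk_left (Nat.le_succ j), blk_self]
        rw [← braid j, mul_assoc]
/-- Pull a whole block through: `[i,j][k+1,j+1] = [k,j][i,j]` for `j ≤ k`, `k+1 ≤ i`. -/
lemma blk_pull_blk {i j : ℕ} : ∀ k, j ≤ k → k + 1 ≤ i →
    blk i j * blk (k + 1) (j + 1) = blk k j * blk i j := by
  intro k
  induction k with
  | zero =>
    intro h1 h2
    have : j = 0 := by omega
    subst this
    simpa [blk_self] using blk_pull i (le_refl 0) h2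
  | succ k ih =>
    intro h1 h2
    rcases Nat.lt_or_ge j (k + 1) with hj | hj
    · rw [blk_left (j := j + 1) (by omega), ← mul_assoc,
        blk_pull i (by omega) (by omega), mul_assoc, ih (by omega) (by omega),
        blk_left (by omega), mul_assoc]
    · -- j = k + 1
      have : j = k + 1 := by omega
      subst this
      rw [blk_self, blk_self]
      exact blk_pull i le_rfl h2

/-- For `j ≤ k - 1`, `k ≤ i` and `l ≤ j`:  `[i,j][k,l] = [k-1,l][i,j+1]`. -/
theorem blk_exchange_le (i j k l : ℕ) (hl : 1 ≤ l) (hlj : l ≤ j)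
    (hjk : j + 1 ≤ k) (hki : k ≤ i) :
    blk i j * blk k l = blk (k - 1) l * blk i (j + 1) := by
  obtain ⟨k', rfl⟩ : ∃ k', k = k' + 1 := ⟨k - 1, by omega⟩
  simp only [Nat.add_sub_cancel]
  have hsplit : blk (k' + 1) l = blk (k' + 1) (j + 1) * blk j l :=
    blk_split (by omega) (by omega)
  rw [hsplit, ← mul_assoc, blk_pull_blk k' (by omega) (by omega)]
  -- now: blk k' j * blk i j * blk j l = blk k' l * blk i (j+1)
  obtain ⟨j', rfl⟩ : ∃ j', j = j' + 1 := ⟨j - 1, by omega⟩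
  have h1 : blk i (j' + 1) * blk (j' + 1) l = blk i (j' + 1 + 1) * blk j' l := by
    rw [blk_right (j := j' + 1) (i := i) (by omega), blk_left (j := l) (by omega),
      mul_assoc, ← mul_assoc (sigmaPerm (j' + 1)),
      show sigmaPerm (j' + 1) * sigmaPerm (j' + 1) = 1 from Equiv.swap_mul_self _ _, one_mul]
  rw [mul_assoc, h1,
    (blk_blk_comm (i1 := i) (j1 := j' + 1 + 1) (i2 := j') (j2 := l) (by omega)).eq,
    ← mul_assoc]
  congr 1
  exact (blk_split (by omega) (by omega)).symm
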